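/- Every graph G satisfies χ_o(G) ≤ 2·tw(G) + 1, where tw(G) is the treewidth of G. -/

import Mathlib

variable {V : Type*} {α : Type*} {β : Type*} {W : Type*}

/-- A proper coloring of `G` with colors `Fin k`. -/
def IsProperColoring (G : SimpleGraph V) {k : ℕ} (f : V → Fin k) : Prop :=
  ∀ ⦃u w : V⦄, G.Adj u w → f u ≠ f w

/-- An odd coloring: a proper coloring such that every vertex with nonempty
neighborhood has some color appearing an odd number of times among its neighbors. -/
def IsOddColoring (G : SimpleGraph V) {k : ℕ} (f : V → Fin k) : Prop :=
  IsProperColoring G f ∧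
    ∀ v : V, (G.neighborSet v).Nonempty →
      ∃ c : Fin k, Odd {u : V | u ∈ G.neighborSet v ∧ f u = c}.ncard

/-- The chromatic number. -/
noncomputable def chi (G : SimpleGraph V) : ℕ :=
  sInf {k : ℕ | ∃ f : V → Fin k, IsProperColoring G f}

/-- The odd chromatic number. -/
noncomputable def oddChi (G : SimpleGraph V) : ℕ :=
  sInf {k : ℕ | ∃ f : V → Fin k, IsOddColoring G f}

/-- A tree decomposition of `G`: a tree whose nodes carry bags of vertices such
that every vertex appears in a bag, the endpoints of every edge share a bag, and
for every vertex the set of nodes whose bag contains it induces a connected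
subgraph of the tree. -/
structure TreeDecomposition (G : SimpleGraph V) where
  ι : Type
  tree : SimpleGraph ι
  isTree : tree.IsTree
  bag : ι → Finset V
  mem_bag : ∀ v : V, ∃ i : ι, v ∈ bag i
  edge_bag : ∀ ⦃u w : V⦄, G.Adj u w → ∃ i : ι, u ∈ bag i ∧ w ∈ bag i
  bag_connected : ∀ v : V, (tree.induce {i : ι | v ∈ bag i}).Connected

/-- The treewidth of `G`: the least `w` such that `G` has a tree decomposition
all of whose bags have size at most `w + 1`. -/
noncomputable def treewidth (G : SimpleGraph V) : ℕ :=
  sInf {w : ℕ | ∃ td : TreeDecomposition G, ∀ i : td.ι, (td.bag i).card ≤ w + 1}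


namespace OddTW
open SimpleGraph Walk

variable {ι : Type*} {T : SimpleGraph ι}

lemma firstHit (P : ι → Prop) {a b : ι} (z : T.Walk a b) :
    P b → ∃ m, P m ∧ ∃ z1 : T.Walk a m, z1.support ⊆ z.support ∧
      ∀ x ∈ z1.support, x ≠ m → ¬ P x := by
  induction z with
  | nil =>
    intro hb
    refine ⟨_, hb, Walk.nil, by simp, ?_⟩
    intro x hx hne
    simp only [Walk.support_nil, List.mem_singleton] at hx
    exact absurd hx hne
  | @cons u c b h z' ih =>
    intro hb
    by_cases hPa : P u
    · refine ⟨u, hPa, Walk.nil, by simp, ?_⟩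
      intro x hx hne
      simp only [Walk.support_nil, List.mem_singleton] at hx
      exact absurd hx hne
    · obtain ⟨m, hPm, z1, hsub, havoid⟩ := ih hb
      refine ⟨m, hPm, Walk.cons h z1, ?_, ?_⟩
      · rw [Walk.support_cons, Walk.support_cons]
        exact fun x hx => by
          rcases List.mem_cons.mp hx with rfl | hx
          · exact List.mem_cons_self
          · exact List.mem_cons_of_mem _ (hsub hx)
      · intro x hx hne
        rw [Walk.support_cons] at hx
        rcases List.mem_cons.mp hx with rfl | hx
        · exact hPa
        · exact havoid x hx hne

lemma dist_eq_of_isPath (hT : T.IsTree) {a b : ι} (p : T.Walk a b) (hp : p.IsPath) :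
    T.dist a b = p.length := by
  classical
  have hreach : T.Reachable a b := ⟨p⟩
  obtain ⟨q, hq⟩ := hreach.exists_walk_length_eq_dist
  have hbp : (⟨q.bypass, q.bypass_isPath⟩ : T.Path a b) = ⟨p, hp⟩ :=
    hT.IsAcyclic.path_unique _ _
  have hlen : q.bypass.length = p.length := by
    have := congrArg (fun r : T.Path a b => (r : T.Walk a b).length) hbp
    simpa using this
  refine le_antisymm (SimpleGraph.dist_le p) ?_
  calc p.length = q.bypass.length := hlen.symm
    _ ≤ q.length := q.length_bypass_le
    _ = T.dist a b := hq

lemma connected_set_path {A : Set ι} (hA : (T.induce A).Connected) {i j : ι}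
    (hi : i ∈ A) (hj : j ∈ A) :
    ∃ p : T.Walk i j, p.IsPath ∧ ∀ x ∈ p.support, x ∈ A := by
  classical
  have hr : (T.induce A).Reachable ⟨i, hi⟩ ⟨j, hj⟩ := hA.preconnected _ _
  obtain ⟨w⟩ := hr
  let w' := w.map (SimpleGraph.Embedding.induce A).toHom
  refine ⟨w'.bypass, w'.bypass_isPath, ?_⟩
  intro x hx
  have hx' : x ∈ w'.support := w'.support_bypass_subset hx
  rw [Walk.support_map] at hx'
  obtain ⟨y, _, rfl⟩ := List.mem_map.mp hx'
  exact y.2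

lemma isPath_append {a b d : ι} {p : T.Walk a b} {q : T.Walk b d}
    (hp : p.IsPath) (hq : q.IsPath)
    (h : ∀ x, x ∈ p.support → x ∈ q.support → x = b) : (p.append q).IsPath := by
  rw [Walk.isPath_def, Walk.support_append]
  refine List.Nodup.append hp.support_nodup ?_ ?_
  · exact (List.nodup_cons.mp (q.support_eq_cons ▸ hq.support_nodup)).2
  · intro x hxp hxq
    have hxq' : x ∈ q.support.tail := hxq
    have hxmem : x ∈ q.support := q.support_eq_cons ▸ List.mem_cons_of_mem _ hxq'
    have hxb : x = b := h x hxp hxmem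
    have : b ∉ q.support.tail := (List.nodup_cons.mp (q.support_eq_cons ▸ hq.support_nodup)).1
    exact this (hxb ▸ hxq')


section TD
open SimpleGraph Walk

variable {V : Type*} {G : SimpleGraph V} (td : TreeDecomposition G)

noncomputable def root : td.ι :=
  @Classical.arbitrary _ td.isTree.isConnected.nonempty

noncomputable def rank (v : V) : ℕ :=
  sInf {n : ℕ | ∃ i : td.ι, v ∈ td.bag i ∧ td.tree.dist (root td) i = n}

lemma rank_set_nonempty (v : V) :
    {n : ℕ | ∃ i : td.ι, v ∈ td.bag i ∧ td.tree.dist (root td) i = n}.Nonempty := by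
  obtain ⟨i, hi⟩ := td.mem_bag v
  exact ⟨_, i, hi, rfl⟩

noncomputable def nd (v : V) : td.ι :=
  (Nat.sInf_mem (rank_set_nonempty td v)).choose

lemma nd_mem (v : V) : v ∈ td.bag (nd td v) :=
  (Nat.sInf_mem (rank_set_nonempty td v)).choose_spec.1

lemma nd_dist (v : V) : td.tree.dist (root td) (nd td v) = rank td v :=
  (Nat.sInf_mem (rank_set_nonempty td v)).choose_spec.2

lemma rank_le (v : V) {i : td.ι} (hi : v ∈ td.bag i) :
    rank td v ≤ td.tree.dist (root td) i :=
  Nat.sInf_le ⟨i, hi, rfl⟩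

lemma nd_mem_path_support (v : V) {j : td.ι} (hj : v ∈ td.bag j)
    (p : td.tree.Walk (root td) j) (hp : p.IsPath) : nd td v ∈ p.support := by
  classical
  obtain ⟨Z, hZp, hZA⟩ :=
    connected_set_path (td.bag_connected v) (nd_mem td v) hj
  obtain ⟨m, hmP, z1, hsub, havoid⟩ := firstHit (· ∈ p.support) Z (p.end_mem_support)
  set z2 := z1.bypass with hz2
  have hz2sub : z2.support ⊆ z1.support := z1.support_bypass_subset
  have hz2p : z2.IsPath := z1.bypass_isPath
  have hrevp : z2.reverse.IsPath := (Walk.isPath_reverse_iff z2).mpr hz2p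
  have hq1 : (p.takeUntil m hmP).IsPath := hp.takeUntil hmP
  have hdisj : ∀ x, x ∈ (p.takeUntil m hmP).support → x ∈ z2.reverse.support → x = m := by
    intro x hx1 hx2
    by_contra hne
    have hx2' : x ∈ z2.support := by rwa [Walk.support_reverse, List.mem_reverse] at hx2
    exact havoid x (hz2sub hx2') hne (p.support_takeUntil_subset hmP hx1)
  have hW : ((p.takeUntil m hmP).append z2.reverse).IsPath := isPath_append hq1 hrevp hdisj
  have hlenW : td.tree.dist (root td) (nd td v) = (p.takeUntil m hmP).length + z2.length := by
    rw [dist_eq_of_isPath td.isTree _ hW, Walk.length_append, Walk.length_reverse]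
  have hlenm : td.tree.dist (root td) m = (p.takeUntil m hmP).length :=
    dist_eq_of_isPath td.isTree _ hq1
  have hmA : v ∈ td.bag m := hZA m (hsub z1.end_mem_support)
  have h1 : rank td v ≤ td.tree.dist (root td) m := rank_le td v hmA
  have h2 : td.tree.dist (root td) (nd td v) = rank td v := nd_dist td v
  have hz20 : z2.length = 0 := by omega
  have hnv : nd td v = m := Walk.eq_of_length_eq_zero hz20
  rw [hnv]; exact hmP

lemma nd_capture {u v : V} (hrk : rank td u ≤ rank td v) {j : td.ι}
    (hu : u ∈ td.bag j) (hv : v ∈ td.bag j) : u ∈ td.bag (nd td v) := by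
  classical
  obtain ⟨w0⟩ := td.isTree.isConnected.preconnected (root td) j
  have hpp : w0.bypass.IsPath := w0.bypass_isPath
  set p := w0.bypass with hpdef
  have h1 : nd td u ∈ p.support := nd_mem_path_support td u hu p hpp
  have h2 : nd td v ∈ p.support := nd_mem_path_support td v hv p hpp
  obtain ⟨Zu, hZup, hZuA⟩ := connected_set_path (td.bag_connected u) (nd_mem td u) hu
  have hdrop : (p.dropUntil (nd td u) h1).IsPath := hpp.dropUntil h1
  have hZeq : (⟨p.dropUntil (nd td u) h1, hdrop⟩ : td.tree.Path (nd td u) j) = ⟨Zu, hZup⟩ :=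
    td.isTree.IsAcyclic.path_unique _ _
  have hdropA : ∀ x ∈ (p.dropUntil (nd td u) h1).support, u ∈ td.bag x := by
    intro x hx
    have hEq := congrArg (fun r : td.tree.Path (nd td u) j => (r : td.tree.Walk (nd td u) j)) hZeq
    simp only at hEq
    rw [hEq] at hx
    exact hZuA x hx
  have hsplit := p.take_spec h1
  have h2' : nd td v ∈ ((p.takeUntil (nd td u) h1).append (p.dropUntil (nd td u) h1)).support := by
    rw [hsplit]; exact h2
  rw [Walk.mem_support_append_iff] at h2'
  rcases h2' with htake | hdropmem
  · have htklen : (p.takeUntil (nd td u) h1).length = td.tree.dist (root td) (nd td u) :=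
      (dist_eq_of_isPath td.isTree _ (hpp.takeUntil h1)).symm
    have htk2 : ((p.takeUntil (nd td u) h1).takeUntil (nd td v) htake).length
        = td.tree.dist (root td) (nd td v) :=
      (dist_eq_of_isPath td.isTree _ ((hpp.takeUntil h1).takeUntil htake)).symm
    have hle := Walk.length_takeUntil_le (p.takeUntil (nd td u) h1) htake
    have hr1 : td.tree.dist (root td) (nd td u) = rank td u := nd_dist td u
    have hr2 : td.tree.dist (root td) (nd td v) = rank td v := nd_dist td v
    have hsp2 := (p.takeUntil (nd td u) h1).take_spec htake
    have hlensum : ((p.takeUntil (nd td u) h1).takeUntil (nd td v) htake).length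
        + ((p.takeUntil (nd td u) h1).dropUntil (nd td v) htake).length
        = (p.takeUntil (nd td u) h1).length := by
      rw [← Walk.length_append, hsp2]
    have hzero : ((p.takeUntil (nd td u) h1).dropUntil (nd td v) htake).length = 0 := by omega
    have heq : nd td v = nd td u := Walk.eq_of_length_eq_zero hzero
    rw [heq]; exact nd_mem td u
  · exact hdropA _ hdropmem

end TD


lemma elim {V : Type*} [Fintype V] (G : SimpleGraph V) (t : ℕ)
    (R : V → V → Prop) (K : V → Finset V) (rk : V → ℕ)
    (hsym : ∀ {u v}, R u v → R v u)
    (hRne : ∀ {u v}, R u v → u ≠ v)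
    (hKself : ∀ v, v ∈ K v) (hKcard : ∀ v, (K v).card ≤ t + 1)
    (hcapt : ∀ {u v}, R u v → rk u ≤ rk v → u ∈ K v)
    (hKR : ∀ {v u u'}, u ∈ K v → u' ∈ K v → u ≠ u' → R u u')
    (hGR : ∀ {u v}, G.Adj u v → R u v) :
    ∀ S : Finset V, ∃ f : V → Fin (2 * t + 1),
      (∀ u w, u ∈ S → w ∈ S → R u w → f u ≠ f w) ∧
      (∀ v ∈ S, {u | u ∈ S ∧ G.Adj v u}.Nonempty →
        ∃ c, Odd {u | u ∈ S ∧ G.Adj v u ∧ f u = c}.ncard) := by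
  classical
  intro S
  induction S using Finset.strongInduction with
  | _ S ih =>
  rcases S.eq_empty_or_nonempty with rfl | hSne
  · exact ⟨fun _ => ⟨0, by omega⟩, by simp, by simp⟩
  obtain ⟨v, hvS, hvmax⟩ := S.exists_max_image rk hSne
  set S' := S.erase v with hS'def
  obtain ⟨f', hf1, hf2⟩ := ih S' (Finset.erase_ssubset hvS)
  set N := S'.filter (fun u => G.Adj v u) with hNdef
  have hNmem : ∀ u ∈ N, u ∈ S' ∧ G.Adj v u := by
    intro u hu
    exact ⟨Finset.mem_of_mem_filter u hu, (Finset.mem_filter.mp hu).2⟩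
  set KS := ((K v).erase v) ∩ S' with hKSdef
  have hNsubKS : N ⊆ KS := by
    intro u hu
    obtain ⟨huS', hadj⟩ := hNmem u hu
    have hune : u ≠ v := (Finset.mem_erase.mp huS').1
    have huK : u ∈ K v := hcapt (hsym (hGR hadj)) (hvmax u (Finset.mem_of_mem_erase huS'))
    exact Finset.mem_inter.mpr ⟨Finset.mem_erase.mpr ⟨hune, huK⟩, huS'⟩
  set wit : V → Fin (2 * t + 1) := fun u =>
    if h : ∃ c, Odd {x | x ∈ S' ∧ G.Adj u x ∧ f' x = c}.ncard then h.choose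
    else ⟨0, by omega⟩ with hwitdef
  set F := (KS.image f') ∪ (N.image wit) with hFdef
  have hFcard : F.card ≤ 2 * t := by
    have h1 : (KS.image f').card ≤ t := by
      calc (KS.image f').card ≤ KS.card := Finset.card_image_le
        _ ≤ ((K v).erase v).card := Finset.card_le_card Finset.inter_subset_left
        _ = (K v).card - 1 := Finset.card_erase_of_mem (hKself v)
        _ ≤ t := by have := hKcard v; omega
    have h2 : (N.image wit).card ≤ t := by
      calc (N.image wit).card ≤ N.card := Finset.card_image_le
        _ ≤ KS.card := Finset.card_le_card hNsubKS
        _ ≤ ((K v).erase v).card := Finset.card_le_card Finset.inter_subset_left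
        _ = (K v).card - 1 := Finset.card_erase_of_mem (hKself v)
        _ ≤ t := by have := hKcard v; omega
    calc F.card ≤ _ := Finset.card_union_le _ _
      _ ≤ 2 * t := by omega
  have hcex : ∃ c : Fin (2 * t + 1), c ∉ F := by
    by_contra h
    push_neg at h
    have huniv : (Finset.univ : Finset (Fin (2 * t + 1))) ⊆ F := fun c _ => h c
    have := Finset.card_le_card huniv
    rw [Finset.card_univ, Fintype.card_fin] at this
    omega
  obtain ⟨c, hcF⟩ := hcex
  set f := Function.update f' v c with hfdef
  have hfv : f v = c := Function.update_self v c f'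
  have hfne : ∀ u, u ≠ v → f u = f' u := fun u hu => Function.update_of_ne hu c f'
  have hcKS : ∀ u ∈ KS, c ≠ f' u := by
    intro u hu heq
    exact hcF (Finset.mem_union_left _ (heq ▸ Finset.mem_image_of_mem f' hu))
  have hcwit : ∀ u ∈ N, c ≠ wit u := by
    intro u hu heq
    exact hcF (Finset.mem_union_right _ (heq ▸ Finset.mem_image_of_mem wit hu))
  refine ⟨f, ?_, ?_⟩
  · -- proper w.r.t. R
    intro u w hu hw hR
    by_cases huv : u = v
    · have hwv : w ≠ v := fun h => hRne hR (huv.trans h.symm)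
      have hwK : w ∈ KS := by
        have hwS' : w ∈ S' := Finset.mem_erase.mpr ⟨hwv, hw⟩
        have hKw : w ∈ K v := hcapt (hsym (show R v w from huv ▸ hR)) (hvmax w hw)
        exact Finset.mem_inter.mpr ⟨Finset.mem_erase.mpr ⟨hwv, hKw⟩, hwS'⟩
      rw [huv, hfv, hfne w hwv]
      exact hcKS w hwK
    · by_cases hwv : w = v
      · subst hwv
        have huK : u ∈ KS := by
          have huS' : u ∈ S' := Finset.mem_erase.mpr ⟨huv, hu⟩
          have : u ∈ K w := hcapt hR (hvmax u hu)
          exact Finset.mem_inter.mpr ⟨Finset.mem_erase.mpr ⟨huv, this⟩, huS'⟩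
        rw [hfne u huv, hfv]
        exact fun h => hcKS u huK h.symm
      · rw [hfne u huv, hfne w hwv]
        exact hf1 u w (Finset.mem_erase.mpr ⟨huv, hu⟩) (Finset.mem_erase.mpr ⟨hwv, hw⟩) hR
  · -- odd condition
    intro w hwS hne
    by_cases hwv : w = v
    · subst hwv
      obtain ⟨u₀, hu₀S, hu₀adj⟩ := hne
      have hu₀v : u₀ ≠ w := hu₀adj.ne'
      have hu₀N : u₀ ∈ N := Finset.mem_filter.mpr ⟨Finset.mem_erase.mpr ⟨hu₀v, hu₀S⟩, hu₀adj⟩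
      refine ⟨f' u₀, ?_⟩
      have hset : {u | u ∈ S ∧ G.Adj w u ∧ f u = f' u₀} = {u₀} := by
        ext u
        simp only [Set.mem_setOf_eq, Set.mem_singleton_iff]
        constructor
        · rintro ⟨huS, hadj, hfu⟩
          have hunv : u ≠ w := hadj.ne'
          have huN : u ∈ N := Finset.mem_filter.mpr ⟨Finset.mem_erase.mpr ⟨hunv, huS⟩, hadj⟩
          by_contra hne'
          have hR : R u u₀ := by
            have h1 : u ∈ K w := Finset.mem_of_mem_erase (Finset.mem_inter.mp (hNsubKS huN)).1
            have h2 : u₀ ∈ K w := Finset.mem_of_mem_erase (Finset.mem_inter.mp (hNsubKS hu₀N)).1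
            exact hKR h1 h2 hne'
          have := hf1 u u₀ (Finset.mem_erase.mpr ⟨hunv, huS⟩)
            (Finset.mem_erase.mpr ⟨hu₀v, hu₀S⟩) hR
          rw [hfne u hunv] at hfu
          exact this hfu
        · rintro rfl
          exact ⟨hu₀S, hu₀adj, hfne _ hu₀v⟩
      rw [hset, Set.ncard_singleton]
      exact odd_one
    · by_cases hadjwv : G.Adj w v
      · by_cases hS'ne : ({u | u ∈ S' ∧ G.Adj w u} : Set V).Nonempty
        · have hwS' : w ∈ S' := Finset.mem_erase.mpr ⟨hwv, hwS⟩
          have hwN : w ∈ N := Finset.mem_filter.mpr ⟨hwS', hadjwv.symm⟩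
          have hex : ∃ c', Odd {x | x ∈ S' ∧ G.Adj w x ∧ f' x = c'}.ncard := hf2 w hwS' hS'ne
          have hwitw : wit w = hex.choose := by rw [hwitdef]; exact dif_pos hex
          have hwspec : Odd {x | x ∈ S' ∧ G.Adj w x ∧ f' x = wit w}.ncard := by
            rw [hwitw]; exact hex.choose_spec
          refine ⟨wit w, ?_⟩
          have hcw : c ≠ wit w := hcwit w hwN
          have hset : {u | u ∈ S ∧ G.Adj w u ∧ f u = wit w}
              = {x | x ∈ S' ∧ G.Adj w x ∧ f' x = wit w} := by
            ext u
            simp only [Set.mem_setOf_eq]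
            constructor
            · rintro ⟨huS, hadj, hfu⟩
              have huv : u ≠ v := by
                rintro rfl
                rw [hfv] at hfu
                exact hcw hfu
              exact ⟨Finset.mem_erase.mpr ⟨huv, huS⟩, hadj, by rw [← hfne u huv]; exact hfu⟩
            · rintro ⟨huS', hadj, hfu⟩
              have huv : u ≠ v := (Finset.mem_erase.mp huS').1
              exact ⟨Finset.mem_of_mem_erase huS', hadj, by rw [hfne u huv]; exact hfu⟩
          rw [hset]
          exact hwspec
        · refine ⟨c, ?_⟩
          have hset : {u | u ∈ S ∧ G.Adj w u ∧ f u = c} = {v} := by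
            ext u
            simp only [Set.mem_setOf_eq, Set.mem_singleton_iff]
            constructor
            · rintro ⟨huS, hadj, hfu⟩
              by_contra huv
              exact hS'ne ⟨u, Finset.mem_erase.mpr ⟨huv, huS⟩, hadj⟩
            · rintro rfl
              exact ⟨hvS, hadjwv, hfv⟩
          rw [hset, Set.ncard_singleton]
          exact odd_one
      · have hsetne : ({u | u ∈ S' ∧ G.Adj w u} : Set V).Nonempty := by
          obtain ⟨u₀, hu₀S, hu₀adj⟩ := hne
          have : u₀ ≠ v := by rintro rfl; exact hadjwv hu₀adj
          exact ⟨u₀, Finset.mem_erase.mpr ⟨this, hu₀S⟩, hu₀adj⟩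
        have hwS' : w ∈ S' := Finset.mem_erase.mpr ⟨hwv, hwS⟩
        obtain ⟨d, hd⟩ := hf2 w hwS' hsetne
        refine ⟨d, ?_⟩
        have hset : {u | u ∈ S ∧ G.Adj w u ∧ f u = d}
            = {x | x ∈ S' ∧ G.Adj w x ∧ f' x = d} := by
          ext u
          simp only [Set.mem_setOf_eq]
          constructor
          · rintro ⟨huS, hadj, hfu⟩
            have huv : u ≠ v := by rintro rfl; exact hadjwv hadj
            exact ⟨Finset.mem_erase.mpr ⟨huv, huS⟩, hadj, by rw [← hfne u huv]; exact hfu⟩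
          · rintro ⟨huS', hadj, hfu⟩
            have huv : u ≠ v := (Finset.mem_erase.mp huS').1
            exact ⟨Finset.mem_of_mem_erase huS', hadj, by rw [hfne u huv]; exact hfu⟩
        rw [hset]
        exact hd


end OddTW

namespace OddTW

noncomputable def tdTrivial {V : Type*} [Fintype V] (G : SimpleGraph V) : TreeDecomposition G where
  ι := Unit
  tree := ⊥
  isTree := by
    constructor
    · constructor
      intro a b
      have : a = b := Subsingleton.elim a b
      subst this
      exact SimpleGraph.Reachable.refl a
    · exact SimpleGraph.isAcyclic_bot
  bag := fun _ => Finset.univ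
  mem_bag := fun v => ⟨(), Finset.mem_univ v⟩
  edge_bag := fun u w _ => ⟨(), Finset.mem_univ u, Finset.mem_univ w⟩
  bag_connected := by
    intro v
    haveI : Nonempty ({i : Unit | v ∈ (Finset.univ : Finset V)} : Set Unit) :=
      ⟨⟨(), Finset.mem_univ v⟩⟩
    constructor
    intro a b
    have : a = b := Subsingleton.elim a b
    subst this
    exact SimpleGraph.Reachable.refl a

end OddTW

/-- `χ_o(G) ≤ 2·tw(G) + 1`. -/
theorem stmt_13 [Fintype V] (G : SimpleGraph V) :
    oddChi G ≤ 2 * treewidth G + 1 := by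
  classical
  have hne : {w : ℕ | ∃ td : TreeDecomposition G, ∀ i : td.ι, (td.bag i).card ≤ w + 1}.Nonempty :=
    ⟨Fintype.card V, OddTW.tdTrivial G, fun _ => by simp [OddTW.tdTrivial]⟩
  obtain ⟨td, hwd⟩ : ∃ td : TreeDecomposition G,
      ∀ i : td.ι, (td.bag i).card ≤ treewidth G + 1 := Nat.sInf_mem hne
  obtain ⟨f, hf1, hf2⟩ := OddTW.elim G (treewidth G)
    (fun u v => u ≠ v ∧ ∃ i, u ∈ td.bag i ∧ v ∈ td.bag i)
    (fun v => td.bag (OddTW.nd td v)) (OddTW.rank td)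
    (fun {u v} h => ⟨h.1.symm, h.2.imp fun i hi => ⟨hi.2, hi.1⟩⟩)
    (fun {u v} h => h.1)
    (fun v => OddTW.nd_mem td v)
    (fun v => hwd _)
    (fun {u v} h hrk => by
      obtain ⟨hne', i, hui, hvi⟩ := h
      exact OddTW.nd_capture td hrk hui hvi)
    (fun {v u u'} hu hu' hne' => ⟨hne', _, hu, hu'⟩)
    (fun {u v} h => ⟨h.ne, td.edge_bag h⟩)
    Finset.univ
  refine Nat.sInf_le ⟨f, ?_, ?_⟩
  · intro u w hadj
    exact hf1 u w (Finset.mem_univ u) (Finset.mem_univ w) ⟨hadj.ne, td.edge_bag hadj⟩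
  · intro v hv
    have hv' : ({u | u ∈ Finset.univ ∧ G.Adj v u} : Set V).Nonempty := by
      obtain ⟨u, hu⟩ := hv
      exact ⟨u, Finset.mem_univ u, hu⟩
    obtain ⟨c, hc⟩ := hf2 v (Finset.mem_univ v) hv'
    refine ⟨c, ?_⟩
    have hseteq : {u : V | u ∈ G.neighborSet v ∧ f u = c}
        = {u | u ∈ Finset.univ ∧ G.Adj v u ∧ f u = c} := by
      ext u
      simp [SimpleGraph.mem_neighborSet, and_assoc]
    rw [hseteq]
    exact hc
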